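/- The following exact matrix identities hold: σ₁σ₂σ₁ = e^{iπ/8}·H, σ₂² = e^{iπ/4}·X, σ₁² = e^{iπ/4}·Z, σ₁²·σ₂^{−2} = i·Y, and σ₁^{−1} = −e^{−iπ/8}·S, where H = (1/√2)·[[1,1],[1,−1]], X = [[0,1],[1,0]], Y = [[0,−i],[i,0]], Z = diag(1,−1), and S = diag(1,i). Hence braiding of Ising anyons implements the single-qubit Clifford generators exactly, up to explicit global phases. -/

import Mathlib

open Complex Matrix

/-- The Ising braid matrix `σ₁ = e^{iπ/8}·diag(−1, i)`. -/
noncomputable def sigma1 : Matrix (Fin 2) (Fin 2) ℂ :=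
  Complex.exp (Complex.I * Real.pi / 8) • !![-1, 0; 0, Complex.I]

/-- The Ising braid matrix `σ₂ = (e^{−iπ/8}/√2)·[[1, i],[i, 1]]`. -/
noncomputable def sigma2 : Matrix (Fin 2) (Fin 2) ℂ :=
  (Complex.exp (-(Complex.I * Real.pi / 8)) / (Real.sqrt 2 : ℂ)) • !![1, Complex.I; Complex.I, 1]

/-- The Hadamard gate. -/
noncomputable def Hgate : Matrix (Fin 2) (Fin 2) ℂ :=
  ((1 / Real.sqrt 2 : ℝ) : ℂ) • !![1, 1; 1, -1]

/-- The Pauli X gate. -/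
def Xgate : Matrix (Fin 2) (Fin 2) ℂ := !![0, 1; 1, 0]

/-- The Pauli Y gate. -/
def Ygate : Matrix (Fin 2) (Fin 2) ℂ := !![0, -Complex.I; Complex.I, 0]

/-- The Pauli Z gate. -/
def Zgate : Matrix (Fin 2) (Fin 2) ℂ := !![1, 0; 0, -1]

/-- The phase gate `S = diag(1, i)`. -/
def Sgate : Matrix (Fin 2) (Fin 2) ℂ := !![1, 0; 0, Complex.I]

lemma sqrt2C : (Real.sqrt 2 : ℂ) * (Real.sqrt 2 : ℂ) = 2 := by
  rw [← Complex.ofReal_mul, Real.mul_self_sqrt (by norm_num : (0:ℝ) ≤ 2)]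
  norm_num

lemma sqrt2C_ne : (Real.sqrt 2 : ℂ) ≠ 0 := by
  simp [Real.sqrt_eq_zero']

lemma exp_mul_exp_neg : Complex.exp (Complex.I * Real.pi / 8) *
    Complex.exp (-(Complex.I * Real.pi / 8)) = 1 := by
  rw [← Complex.exp_add]; simp

lemma exp_sq : Complex.exp (Complex.I * Real.pi / 8) * Complex.exp (Complex.I * Real.pi / 8)
    = Complex.exp (Complex.I * Real.pi / 4) := by
  rw [← Complex.exp_add]; ring_nf

lemma exp_neg_sq_I : Complex.exp (-(Complex.I * Real.pi / 8)) *
    Complex.exp (-(Complex.I * Real.pi / 8)) * Complex.I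
    = Complex.exp (Complex.I * Real.pi / 4) := by
  have hI : Complex.exp (Complex.I * Real.pi / 2) = Complex.I := by
    rw [show Complex.I * (Real.pi:ℂ) / 2 = ((Real.pi/2 : ℝ):ℂ) * Complex.I by push_cast; ring,
      Complex.exp_mul_I, ← Complex.ofReal_cos, ← Complex.ofReal_sin]
    simp
  conv_rhs => rw [show Complex.I * (Real.pi:ℂ) / 4 =
    -(Complex.I * Real.pi / 8) + -(Complex.I * Real.pi / 8) + Complex.I * Real.pi / 2 by ring]
  rw [Complex.exp_add, Complex.exp_add, hI]

set_option maxHeartbeats 1600000 in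
/-- Braiding of semisimple Ising anyons implements the single-qubit Clifford generators
exactly, up to explicit global phases. -/
theorem ising_clifford_gates :
    sigma1 * sigma2 * sigma1 = Complex.exp (Complex.I * Real.pi / 8) • Hgate ∧
    sigma2 ^ 2 = Complex.exp (Complex.I * Real.pi / 4) • Xgate ∧
    sigma1 ^ 2 = Complex.exp (Complex.I * Real.pi / 4) • Zgate ∧
    sigma1 ^ 2 * (sigma2 ^ 2)⁻¹ = Complex.I • Ygate ∧
    sigma1⁻¹ = (-Complex.exp (-(Complex.I * Real.pi / 8))) • Sgate := by
  have hkey : Complex.exp (-(Complex.I * (Real.pi:ℂ)) / 8) *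
      Complex.exp (-(Complex.I * (Real.pi:ℂ)) / 8) * Complex.I
      = Complex.exp (Complex.I * Real.pi / 4) := by
    rw [show -(Complex.I * (Real.pi:ℂ)) / 8 = -(Complex.I * Real.pi / 8) by ring]
    exact exp_neg_sq_I
  have h2 : sigma2 ^ 2 = Complex.exp (Complex.I * Real.pi / 4) • Xgate := by
    rw [sq]
    ext i j
    fin_cases i <;> fin_cases j <;>
      simp [sigma2, Xgate, Matrix.mul_apply, Fin.sum_univ_two] <;>
      field_simp <;>
      first
        | linear_combination (Complex.exp (-(Complex.I * (Real.pi:ℂ) / 8)))^2 * Complex.I_sq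
        | linear_combination 2 * exp_neg_sq_I - Complex.exp (Complex.I * Real.pi / 4) * sqrt2C
  have h3 : sigma1 ^ 2 = Complex.exp (Complex.I * Real.pi / 4) • Zgate := by
    rw [sq]
    ext i j
    fin_cases i <;> fin_cases j <;>
      simp [sigma1, Zgate, Matrix.mul_apply, Fin.sum_univ_two, exp_sq, Complex.I_mul_I]
    linear_combination Complex.I^2 * exp_sq + Complex.exp (Complex.I * Real.pi / 4) * Complex.I_sq
  have hXX : Xgate * Xgate = 1 := by
    ext i j; fin_cases i <;> fin_cases j <;> simp [Xgate, Matrix.mul_apply, Fin.sum_univ_two]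
  have hXinv : (Complex.exp (Complex.I * Real.pi / 4) • Xgate)⁻¹
      = (Complex.exp (Complex.I * Real.pi / 4))⁻¹ • Xgate := by
    apply Matrix.inv_eq_right_inv
    rw [Matrix.smul_mul, Matrix.mul_smul, smul_smul, hXX,
      mul_inv_cancel₀ (Complex.exp_ne_zero _), one_smul]
  refine ⟨?_, h2, h3, ?_, ?_⟩
  · ext i j
    fin_cases i <;> fin_cases j <;>
      simp [sigma1, sigma2, Hgate, Matrix.mul_apply, Fin.sum_univ_two] <;>
      first
        | linear_combination (Complex.exp (Complex.I * Real.pi / 8) / (Real.sqrt 2 : ℂ)) *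
            exp_mul_exp_neg
        | linear_combination (-(Complex.exp (Complex.I * Real.pi / 8)) * Complex.I ^ 2 /
              (Real.sqrt 2 : ℂ)) * exp_mul_exp_neg -
            (Complex.exp (Complex.I * Real.pi / 8) / (Real.sqrt 2 : ℂ)) * Complex.I_sq
        | linear_combination (Complex.exp (Complex.I * Real.pi / 8) * Complex.I ^ 2 /
              (Real.sqrt 2 : ℂ)) * exp_mul_exp_neg +
            (Complex.exp (Complex.I * Real.pi / 8) / (Real.sqrt 2 : ℂ)) * Complex.I_sq
  · rw [h2, h3, hXinv, Matrix.smul_mul, Matrix.mul_smul, smul_smul,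
      mul_inv_cancel₀ (Complex.exp_ne_zero _), one_smul]
    ext i j
    fin_cases i <;> fin_cases j <;>
      simp [Xgate, Ygate, Zgate, Matrix.mul_apply, Fin.sum_univ_two]
  · apply Matrix.inv_eq_right_inv
    ext i j
    fin_cases i <;> fin_cases j <;>
      simp [sigma1, Sgate, Matrix.mul_apply, Fin.sum_univ_two, exp_mul_exp_neg,
        Complex.I_mul_I]
    linear_combination exp_mul_exp_neg -
      (Complex.exp (Complex.I * Real.pi / 8) * Complex.exp (-(Complex.I * Real.pi / 8))) *
        Complex.I_sq
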